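/- Let ι be a finite type, l a positive natural number, f : ι → Fin l, and let A be a square real matrix indexed by ι with nonnegative entries that is block lower triangular with respect to f (A i j = 0 whenever f i < f j), and such that each nonempty diagonal-block submatrix A|_{f⁻¹(p)} is irreducible. Suppose there exist C₁, C₂ > 0 and ρ > 1 with C₁·ρ^n ≤ S(A^n) ≤ C₂·ρ^n for all n ≥ 1. Let T ⊆ ι be the union of the blocks f⁻¹(p) whose submatrix has spectral radius equal to ρ (the contributing components). Then the submatrix A|_{ι∖T} has spectral radius ρ₁ strictly less than ρ, and consequently for every ρ' with ρ₁ < ρ' there exists C > 0 such that S((A|_{ι∖T})^n) ≤ C·(ρ')^n for all n ≥ 1. -/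

import Mathlib

open scoped BigOperators

attribute [local instance] Classical.propDecidable

/-- The sum of all entries of a square matrix. -/
def entrySum {ι : Type*} [Fintype ι] (B : Matrix ι ι ℝ) : ℝ := ∑ i, ∑ j, B i j

/-- The submatrix of `A` with both indices restricted to the set `s`. -/
def subMat {ι : Type*} (A : Matrix ι ι ℝ) (s : Set ι) : Matrix s s ℝ :=
  A.submatrix Subtype.val Subtype.val

/-- A nonnegative square matrix `B` is irreducible if for all indices `i, j` some power of `B`
has strictly positive `(i,j)` entry. -/
def MatIrreducible {κ : Type*} [Fintype κ] [DecidableEq κ] (B : Matrix κ κ ℝ) : Prop :=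
  ∀ i j, ∃ m : ℕ, 1 ≤ m ∧ 0 < (B ^ m) i j

/-- The spectral radius of a real square matrix: the spectral radius (supremum of the moduli
of the complex eigenvalues) of the matrix viewed as a complex matrix. -/
noncomputable def matrixSpectralRadius {ι : Type*} [Fintype ι] [DecidableEq ι]
    (A : Matrix ι ι ℝ) : ENNReal :=
  spectralRadius ℂ (A.map (Complex.ofReal ·))

open scoped ENNReal

section auxiliary

variable {κ : Type*} [Fintype κ] [DecidableEq κ]

attribute [local instance] Matrix.linftyOpNormedRing Matrix.linftyOpNormedAlgebra

lemma mapC_pow (M : Matrix κ κ ℝ) (n : ℕ) :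
    (M.map (Complex.ofReal ·)) ^ n = (M ^ n).map (Complex.ofReal ·) := by
  have h := map_pow (Complex.ofRealHom.mapMatrix (m := κ)) M n
  exact h.symm

lemma entry_pow_nonneg' (M : Matrix κ κ ℝ) (hM : ∀ i j, 0 ≤ M i j) (n : ℕ) :
    ∀ i j, 0 ≤ (M ^ n) i j := by
  induction n with
  | zero => intro i j; by_cases h : i = j <;> simp [Matrix.one_apply, h]
  | succ n ih =>
      intro i j
      rw [pow_succ, Matrix.mul_apply]
      exact Finset.sum_nonneg fun k _ => mul_nonneg (ih i k) (hM k j)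

lemma nnnorm_mapC_le (M : Matrix κ κ ℝ) (hM : ∀ i j, 0 ≤ M i j) :
    ‖M.map (Complex.ofReal ·)‖₊ ≤ (entrySum M).toNNReal := by
  unfold entrySum
  rw [Matrix.linfty_opNNNorm_def]
  refine Finset.sup_le fun i _ => ?_
  rw [← NNReal.coe_le_coe,
    Real.coe_toNNReal _ (Finset.sum_nonneg fun a _ => Finset.sum_nonneg fun b _ => hM a b),
    NNReal.coe_sum]
  have h1 : ∀ j, ((‖(M.map (Complex.ofReal ·)) i j‖₊ : ℝ)) = M i j := by
    intro j
    simp [Matrix.map_apply, Complex.nnnorm_real, abs_of_nonneg (hM i j)]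
  calc (∑ j, (‖(M.map (Complex.ofReal ·)) i j‖₊ : ℝ)) = ∑ j, M i j := by
        simp only [h1]
    _ ≤ ∑ a, ∑ j, M a j := Finset.single_le_sum
        (f := fun a => ∑ j, M a j)
        (fun a _ => Finset.sum_nonneg fun b _ => hM a b) (Finset.mem_univ i)

lemma entrySum_le_card_norm (M : Matrix κ κ ℝ) (hM : ∀ i j, 0 ≤ M i j) :
    entrySum M ≤ (Fintype.card κ : ℝ) * ‖M.map (Complex.ofReal ·)‖ := by
  unfold entrySum
  have hrow : ∀ i : κ, ∑ j, M i j ≤ ‖M.map (Complex.ofReal ·)‖ := by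
    intro i
    have h2 : (∑ j, ‖(M.map (Complex.ofReal ·)) i j‖₊ : NNReal)
        ≤ ‖M.map (Complex.ofReal ·)‖₊ := by
      rw [Matrix.linfty_opNNNorm_def]
      exact Finset.le_sup (f := fun a => ∑ j, ‖(M.map (Complex.ofReal ·)) a j‖₊)
        (Finset.mem_univ i)
    have h3 := NNReal.coe_le_coe.mpr h2
    rw [NNReal.coe_sum] at h3
    have h1 : ∀ j, ((‖(M.map (Complex.ofReal ·)) i j‖₊ : ℝ)) = M i j := by
      intro j
      simp [Matrix.map_apply, Complex.nnnorm_real, abs_of_nonneg (hM i j)]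
    simpa only [h1, coe_nnnorm] using h3
  calc ∑ i, ∑ j, M i j ≤ ∑ _i : κ, ‖M.map (Complex.ofReal ·)‖ :=
        Finset.sum_le_sum fun i _ => hrow i
    _ = (Fintype.card κ : ℝ) * ‖M.map (Complex.ofReal ·)‖ := by
        rw [Finset.sum_const, Finset.card_univ, nsmul_eq_mul]

/-- If the entry sums of powers of a nonnegative matrix grow at most like `c * r ^ n`,
the spectral radius is at most `r`. -/
lemma sr_le_of_growth (M : Matrix κ κ ℝ) (hM : ∀ i j, 0 ≤ M i j)
    (c r : ℝ) (hc : 0 < c) (hr : 0 < r)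
    (h : ∀ n : ℕ, 1 ≤ n → entrySum (M ^ n) ≤ c * r ^ n) :
    matrixSpectralRadius M ≤ ENNReal.ofReal r := by
  rcases isEmpty_or_nonempty κ with hκ | hκ
  · have : spectrum ℂ (M.map (Complex.ofReal ·)) = ∅ := by
      haveI : Subsingleton (Matrix κ κ ℂ) := ⟨fun a b => by ext i j; exact (IsEmpty.elim hκ i)⟩
      ext z
      simp only [spectrum.mem_iff, Set.mem_empty_iff_false, iff_false, not_not]
      exact isUnit_of_subsingleton _
    rw [matrixSpectralRadius, spectralRadius, this]
    simp
  · set Mc := M.map (Complex.ofReal ·) with hMc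
    have hbound : ∀ n : ℕ, (‖Mc ^ (n+1)‖₊ : ENNReal) ≤ ENNReal.ofReal (c * r ^ (n+1)) := by
      intro n
      rw [mapC_pow]
      have h1 := nnnorm_mapC_le (M ^ (n+1)) (entry_pow_nonneg' M hM (n+1))
      have h2 : ((entrySum (M ^ (n+1))).toNNReal : ENNReal) ≤ ENNReal.ofReal (c * r ^ (n+1)) := by
        rw [ENNReal.ofReal]
        exact_mod_cast Real.toNNReal_mono (h (n+1) (Nat.le_add_left 1 n))
      exact le_trans (by exact_mod_cast ENNReal.coe_mono h1) h2
    have key : ∀ n : ℕ, matrixSpectralRadius M ≤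
        (ENNReal.ofReal (c * r ^ (n+1))) ^ (1 / (n+1 : ℝ)) := by
      intro n
      have hthis := spectrum.spectralRadius_le_pow_nnnorm_pow_one_div ℂ Mc n
      have h1 : (‖(1 : Matrix κ κ ℂ)‖₊ : ENNReal) = 1 := by
        rw [nnnorm_one]; simp
      rw [h1, ENNReal.one_rpow, mul_one] at hthis
      exact le_trans hthis (ENNReal.rpow_le_rpow (hbound n) (by positivity))
    have hfin : matrixSpectralRadius M ≠ ⊤ := by
      have h0 := key 0
      rw [(by norm_num : (1 / ((0:ℕ) + 1 : ℝ)) = (1:ℝ)), ENNReal.rpow_one] at h0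
      exact ne_top_of_le_ne_top ENNReal.ofReal_ne_top h0
    set t := (matrixSpectralRadius M).toReal with ht
    have hpow : ∀ n : ℕ, t ^ (n+1) ≤ c * r ^ (n+1) := by
      intro n
      have hy : (ENNReal.ofReal (c * r ^ (n+1))) ≠ ⊤ := ENNReal.ofReal_ne_top
      have h2 : matrixSpectralRadius M ^ (n+1) ≤ ENNReal.ofReal (c * r ^ (n+1)) := by
        have h3 := pow_le_pow_left₀ zero_le (key n) (n+1)
        have h4 : ((ENNReal.ofReal (c * r ^ (n+1))) ^ (1 / (n+1 : ℝ))) ^ (n+1)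
            = ENNReal.ofReal (c * r ^ (n+1)) := by
          rw [← ENNReal.rpow_natCast (_ ^ (1 / (n+1 : ℝ))), ← ENNReal.rpow_mul]
          push_cast
          rw [one_div_mul_cancel (by positivity : ((n:ℝ)+1) ≠ 0), ENNReal.rpow_one]
        rwa [h4] at h3
      have h5 := ENNReal.toReal_mono hy h2
      rw [ENNReal.toReal_pow, ENNReal.toReal_ofReal (by positivity)] at h5
      exact h5
    have htr : t ≤ r := by
      by_contra hcon
      push_neg at hcon
      have h1t : 1 < t / r := (one_lt_div hr).mpr hcon
      obtain ⟨n, hn⟩ := pow_unbounded_of_one_lt c h1t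
      have h6 : (t / r) ^ n ≤ (t / r) ^ (n + 1) :=
        pow_le_pow_right₀ h1t.le (Nat.le_succ n)
      have h7 : (t / r) ^ (n + 1) ≤ c := by
        rw [div_pow, div_le_iff₀ (by positivity)]
        exact hpow n
      linarith
    calc matrixSpectralRadius M = ENNReal.ofReal t := (ENNReal.ofReal_toReal hfin).symm
      _ ≤ ENNReal.ofReal r := ENNReal.ofReal_le_ofReal htr

lemma growth_of_sr (M : Matrix κ κ ℝ) (hM : ∀ i j, 0 ≤ M i j)
    (hfin : matrixSpectralRadius M ≠ ⊤) (ρ' : ℝ)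
    (hρ' : (matrixSpectralRadius M).toReal < ρ') :
    ∃ C : ℝ, 0 < C ∧ ∀ n : ℕ, 1 ≤ n → entrySum (M ^ n) ≤ C * ρ' ^ n := by
  have hρ'pos : 0 < ρ' := lt_of_le_of_lt ENNReal.toReal_nonneg hρ'
  rcases isEmpty_or_nonempty κ with hκ | hκ
  · refine ⟨1, one_pos, fun n _ => ?_⟩
    unfold entrySum
    rw [Finset.univ_eq_empty, Finset.sum_empty]
    positivity
  · set Mc := M.map (Complex.ofReal ·) with hMc
    have hlt : spectralRadius ℂ Mc < ENNReal.ofReal ρ' :=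
      (ENNReal.lt_ofReal_iff_toReal_lt hfin).mpr hρ'
    have htend := spectrum.pow_nnnorm_pow_one_div_tendsto_nhds_spectralRadius Mc
    obtain ⟨N, hN⟩ := Filter.eventually_atTop.mp (htend.eventually_lt_const hlt)
    set K := max N 1 with hK
    have hbig : ∀ n : ℕ, K ≤ n → entrySum (M ^ n) ≤ (Fintype.card κ : ℝ) * ρ' ^ n := by
      intro n hn
      have hn1 : 1 ≤ n := le_trans (le_max_right N 1) hn
      have hnN : N ≤ n := le_trans (le_max_left N 1) hn
      have hx := hN n hnN
      have hxn : (‖Mc ^ n‖₊ : ENNReal) ≤ (ENNReal.ofReal ρ') ^ n := by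
        have h3 := pow_le_pow_left₀ zero_le hx.le n
        have h4 : ((‖Mc ^ n‖₊ : ENNReal) ^ (1 / (n : ℝ))) ^ n = (‖Mc ^ n‖₊ : ENNReal) := by
          rw [← ENNReal.rpow_natCast (_ ^ (1 / (n : ℝ))), ← ENNReal.rpow_mul,
            one_div_mul_cancel (by exact_mod_cast Nat.one_le_iff_ne_zero.mp hn1 : (n:ℝ) ≠ 0),
            ENNReal.rpow_one]
        rwa [h4] at h3
      rw [← ENNReal.ofReal_pow hρ'pos.le] at hxn
      have h5 := ENNReal.toReal_mono ENNReal.ofReal_ne_top hxn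
      rw [ENNReal.coe_toReal, coe_nnnorm, ENNReal.toReal_ofReal (by positivity)] at h5
      calc entrySum (M ^ n) ≤ (Fintype.card κ : ℝ) * ‖(M ^ n).map (Complex.ofReal ·)‖ :=
            entrySum_le_card_norm (M ^ n) (entry_pow_nonneg' M hM n)
        _ = (Fintype.card κ : ℝ) * ‖Mc ^ n‖ := by rw [mapC_pow]
        _ ≤ (Fintype.card κ : ℝ) * ρ' ^ n :=
            mul_le_mul_of_nonneg_left h5 (Nat.cast_nonneg _)
    have hKpos : 0 < K := lt_of_lt_of_le one_pos (le_max_right N 1)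
    have hne : (Finset.range K).Nonempty := ⟨0, Finset.mem_range.mpr hKpos⟩
    set C : ℝ := max ((Fintype.card κ : ℝ) + 1)
      ((Finset.range K).sup' hne (fun n => entrySum (M ^ n) / ρ' ^ n) + 1) with hC
    have hCpos : 0 < C := lt_of_lt_of_le (by positivity) (le_max_left _ _)
    refine ⟨C, hCpos, fun n hn1 => ?_⟩
    rcases le_or_gt K n with h | h
    · calc entrySum (M ^ n) ≤ (Fintype.card κ : ℝ) * ρ' ^ n := hbig n h
        _ ≤ C * ρ' ^ n := by
            refine mul_le_mul_of_nonneg_right ?_ (by positivity)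
            exact le_trans (by linarith) (le_max_left _ _)
    · have hmem : n ∈ Finset.range K := Finset.mem_range.mpr h
      have h6 : entrySum (M ^ n) / ρ' ^ n ≤ C := by
        refine le_trans ?_ (le_max_right _ _)
        have := Finset.le_sup' (fun m => entrySum (M ^ m) / ρ' ^ m) hmem
        linarith
      calc entrySum (M ^ n) = (entrySum (M ^ n) / ρ' ^ n) * ρ' ^ n := by
            field_simp
        _ ≤ C * ρ' ^ n := mul_le_mul_of_nonneg_right h6 (by positivity)

end auxiliary

section auxiliary2

variable {ι : Type*} [Fintype ι] [DecidableEq ι] (A : Matrix ι ι ℝ)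

lemma sum_subtype_le' (s : Set ι) (g : ι → ℝ)
    (hg : ∀ i, 0 ≤ g i) : ∑ i : s, g i.val ≤ ∑ i, g i := by
  classical
  rw [← Finset.sum_subtype (Finset.univ.filter (· ∈ s))
    (fun x => by simp) g]
  exact Finset.sum_le_sum_of_subset_of_nonneg (Finset.filter_subset _ _)
    fun i _ _ => hg i

lemma subMat_pow_le (hA : ∀ i j, 0 ≤ A i j) (s : Set ι) (n : ℕ) :
    ∀ i j : s, ((subMat A s) ^ n) i j ≤ (A ^ n) i.val j.val := by
  induction n with
  | zero =>
      intro i j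
      by_cases h : i = j
      · subst h; simp [Matrix.one_apply]
      · have h' : i.val ≠ j.val := fun hc => h (Subtype.ext hc)
        simp [Matrix.one_apply, h, h']
  | succ n ih =>
      intro i j
      rw [pow_succ, pow_succ, Matrix.mul_apply, Matrix.mul_apply]
      calc ∑ k : s, ((subMat A s) ^ n) i k * (subMat A s) k j
          ≤ ∑ k : s, (A ^ n) i.val k.val * A k.val j.val := by
            refine Finset.sum_le_sum fun k _ => ?_
            exact mul_le_mul (ih i k) (le_refl _) (hA _ _)
              (entry_pow_nonneg' A hA n _ _)
        _ ≤ ∑ k, (A ^ n) i.val k * A k j.val :=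
            sum_subtype_le' s (fun k => (A ^ n) i.val k * A k j.val)
              (fun k => mul_nonneg (entry_pow_nonneg' A hA n _ _) (hA _ _))

lemma entrySum_subMat_pow_le (hA : ∀ i j, 0 ≤ A i j) (s : Set ι) (n : ℕ) :
    entrySum ((subMat A s) ^ n) ≤ entrySum (A ^ n) := by
  unfold entrySum
  have hnn := entry_pow_nonneg' A hA n
  calc ∑ i : s, ∑ j : s, ((subMat A s) ^ n) i j
      ≤ ∑ i : s, ∑ j : s, (A ^ n) i.val j.val :=
        Finset.sum_le_sum fun i _ => Finset.sum_le_sum fun j _ => subMat_pow_le A hA s n i j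
    _ ≤ ∑ i : s, ∑ j, (A ^ n) i.val j :=
        Finset.sum_le_sum fun i _ =>
          sum_subtype_le' s (fun j => (A ^ n) i.val j) (fun j => hnn _ _)
    _ ≤ ∑ i, ∑ j, (A ^ n) i j :=
        sum_subtype_le' s (fun i => ∑ j, (A ^ n) i j)
          (fun i => Finset.sum_nonneg fun j _ => hnn _ _)

end auxiliary2

lemma msr_congr {κ : Type*} {F1 F2 : Fintype κ} {D1 D2 : DecidableEq κ} (M : Matrix κ κ ℝ) :
    @matrixSpectralRadius κ F1 D1 M = @matrixSpectralRadius κ F2 D2 M := by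
  rw [Subsingleton.elim F1 F2, Subsingleton.elim D1 D2]

/-- Part (d) of Proposition 2: for a nonnegative block lower triangular matrix `A` with
irreducible diagonal blocks and entry sums of powers growing like `ρ^n` (`ρ > 1`), the
submatrix obtained by deleting the contributing components (blocks of spectral radius `ρ`)
has spectral radius `ρ₁ < ρ`; consequently for every `ρ' > ρ₁` the entry sums of its powers
are bounded by `C (ρ')^n`, i.e. the number of paths avoiding the contributing components
grows not faster than `ρ₁^n`. -/
theorem spectralRadius_outside_contributing_lt
    {ι : Type*} [Fintype ι] [DecidableEq ι] (l : ℕ) (hl : 0 < l)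
    (f : ι → Fin l) (A : Matrix ι ι ℝ)
    (hA : ∀ i j, 0 ≤ A i j)
    (htri : ∀ i j, f i < f j → A i j = 0)
    (hirr : ∀ p : Fin l, (∃ i, f i = p) → MatIrreducible (subMat A {i | f i = p}))
    (C₁ C₂ ρ : ℝ) (hC₁ : 0 < C₁) (hC₂ : 0 < C₂) (hρ : 1 < ρ)
    (hgrow : ∀ n : ℕ, 1 ≤ n →
      C₁ * ρ ^ n ≤ entrySum (A ^ n) ∧ entrySum (A ^ n) ≤ C₂ * ρ ^ n)
    (T : Set ι)
    (hT : T = {i | matrixSpectralRadius (subMat A {j | f j = f i}) = ENNReal.ofReal ρ}) :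
    matrixSpectralRadius (subMat A Tᶜ) < ENNReal.ofReal ρ ∧
    ∀ ρ' : ℝ, (matrixSpectralRadius (subMat A Tᶜ)).toReal < ρ' →
      ∃ C : ℝ, 0 < C ∧ ∀ n : ℕ, 1 ≤ n → entrySum ((subMat A Tᶜ) ^ n) ≤ C * ρ' ^ n := by
  classical
  have hρ0 : (0:ℝ) < ρ := lt_trans one_pos hρ
  have hsub : ∀ s : Set ι, matrixSpectralRadius (subMat A s) ≤ ENNReal.ofReal ρ := by
    intro s
    refine sr_le_of_growth _ (fun i j => hA _ _) C₂ ρ hC₂ hρ0 ?_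
    intro n hn
    exact le_trans (entrySum_subMat_pow_le A hA s n) (hgrow n hn).2
  have hpart1 : matrixSpectralRadius (subMat A Tᶜ) < ENNReal.ofReal ρ := by
    have hρE : (⊥ : ℝ≥0∞) < ENNReal.ofReal ρ := by
      simpa using ENNReal.ofReal_pos.mpr hρ0
    set srp : Fin l → ℝ≥0∞ := fun p => matrixSpectralRadius (subMat A {i | f i = p}) with hsrp
    have hmemT : ∀ i, i ∈ T ↔ srp (f i) = ENNReal.ofReal ρ := by
      intro i; rw [hT]; exact Iff.rfl
    set S : ℝ≥0∞ := Finset.univ.sup (fun p => if srp p = ENNReal.ofReal ρ then 0 else srp p)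
      with hS
    have hSlt : S < ENNReal.ofReal ρ := by
      rw [hS, Finset.sup_lt_iff hρE]
      intro p _
      by_cases hp : srp p = ENNReal.ofReal ρ
      · rw [if_pos hp]; exact hρE
      · rw [if_neg hp]; exact lt_of_le_of_ne (le_trans (le_of_eq (msr_congr _)) (hsub _)) hp
    set Bc := (subMat A Tᶜ).map (Complex.ofReal ·) with hBc
    have hspec : ∀ μ ∈ spectrum ℂ Bc, (‖μ‖₊ : ℝ≥0∞) ≤ S := by
      intro μ hμ
      rw [spectrum.mem_iff] at hμ
      set b : ↥(Tᶜ) → (Fin l)ᵒᵈ := fun x => OrderDual.toDual (f x.val) with hb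
      have htriB : Matrix.BlockTriangular (algebraMap ℂ (Matrix ↥(Tᶜ) ↥(Tᶜ) ℂ) μ - Bc) b := by
        refine Matrix.BlockTriangular.sub ?_ ?_
        · intro x y hxy
          rw [Matrix.algebraMap_matrix_apply, if_neg]
          intro hcon; rw [hcon] at hxy; exact lt_irrefl _ hxy
        · intro x y hxy
          have hfxy : f x.val < f y.val := hxy
          show Complex.ofReal (A x.val y.val) = 0
          rw [htri _ _ hfxy, Complex.ofReal_zero]
      have hdet : (algebraMap ℂ (Matrix ↥(Tᶜ) ↥(Tᶜ) ℂ) μ - Bc).det = 0 := by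
        by_contra hd
        exact hμ ((Matrix.isUnit_iff_isUnit_det _).mpr (isUnit_iff_ne_zero.mpr hd))
      rw [htriB.det_fintype] at hdet
      obtain ⟨k, _, hk⟩ := Finset.prod_eq_zero_iff.mp hdet
      set p : Fin l := OrderDual.ofDual k with hp'
      by_cases hp : srp p = ENNReal.ofReal ρ
      · haveI : IsEmpty {x : ↥(Tᶜ) // b x = k} := by
          constructor; rintro ⟨x, hx⟩
          have hfx : f x.val = p := congrArg OrderDual.ofDual hx
          have hxT : x.val ∈ T := (hmemT x.val).mpr (by rw [hfx]; exact hp)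
          exact x.prop hxT
        rw [Matrix.det_isEmpty] at hk
        exact absurd hk one_ne_zero
      · have hTp : ∀ i : ι, f i = p → i ∈ Tᶜ := by
          intro i hi hiT
          exact hp (by rw [← hi]; exact (hmemT i).mp hiT)
        let e : {x : ↥(Tᶜ) // b x = k} ≃ ↥{i | f i = p} :=
          { toFun := fun x => ⟨x.val.val, congrArg OrderDual.ofDual x.prop⟩
            invFun := fun i => ⟨⟨i.val, hTp i.val i.prop⟩, congrArg OrderDual.toDual i.prop⟩
            left_inv := fun x => Subtype.ext (Subtype.ext rfl)
            right_inv := fun i => Subtype.ext rfl }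
        set Dc := (subMat A {i | f i = p}).map (Complex.ofReal ·) with hDc
        have hreix : (Matrix.reindexAlgEquiv ℂ ℂ e)
              ((algebraMap ℂ (Matrix ↥(Tᶜ) ↥(Tᶜ) ℂ) μ - Bc).toSquareBlock b k)
            = algebraMap ℂ (Matrix ↥{i | f i = p} ↥{i | f i = p} ℂ) μ - Dc := by
          ext x y
          simp only [Matrix.reindexAlgEquiv_apply, Matrix.reindex_apply, Matrix.submatrix_apply,
            Matrix.toSquareBlock_def, Matrix.sub_apply, Matrix.algebraMap_matrix_apply,
            Matrix.map_apply, subMat, hBc]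
          have hval : ∀ z : ↥{i | f i = p}, ((e.symm z : ↥(Tᶜ)) : ι) = (z : ι) := fun z => rfl
          by_cases hxy : x = y
          · subst hxy
            simp only [hDc, Matrix.map_apply, subMat, Matrix.submatrix_apply, Matrix.of_apply]
            rw [hval]
          · have h2 : ((e.symm x) : ↥(Tᶜ)) ≠ ((e.symm y) : ↥(Tᶜ)) := by
              intro hc
              exact hxy (by simpa using congrArg e (Subtype.ext hc))
            have hxy' : (x : ι) ≠ (y : ι) := fun hc => hxy (Subtype.ext hc)
            simp only [hDc, Matrix.map_apply, subMat, Matrix.submatrix_apply, Matrix.of_apply]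
            rw [if_neg h2, hval, hval, if_neg hxy]
        have hdet2 : (algebraMap ℂ (Matrix ↥{i | f i = p} ↥{i | f i = p} ℂ) μ - Dc).det = 0 := by
          rw [← hreix, Matrix.reindexAlgEquiv_apply, Matrix.det_reindex_self]
          exact hk
        have hμD : μ ∈ spectrum ℂ Dc := by
          rw [spectrum.mem_iff]
          intro hu
          rw [Matrix.isUnit_iff_isUnit_det, isUnit_iff_ne_zero] at hu
          exact hu hdet2
        have hle : (‖μ‖₊ : ℝ≥0∞) ≤ srp p :=
          le_iSup₂ (f := fun z (_ : z ∈ spectrum ℂ Dc) => (‖z‖₊ : ℝ≥0∞)) μ hμD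
        refine le_trans hle (le_trans ?_ (Finset.le_sup (Finset.mem_univ p)))
        rw [if_neg hp]
    have h1 : matrixSpectralRadius (subMat A Tᶜ) ≤ S := iSup₂_le hspec
    exact lt_of_le_of_lt h1 hSlt
  refine ⟨hpart1, ?_⟩
  intro ρ' hρ'
  exact growth_of_sr (subMat A Tᶜ) (fun i j => hA _ _) (ne_top_of_lt hpart1) ρ' hρ'
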